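/- arXiv:2605.04692 — 2 statements merged into one kernel-verified Lean document; each statement's English description precedes it below -/
import Mathlib

section
/- Let V : ℝ → ℝ be a nonnegative differentiable function on [0,∞), let 0 < θ < δ, let μ₁, μ₂ > 0 be constants with ε := μ₁θ − μ₂(δ−θ) > 0, and let (t_k)_{k∈ℕ}, (s_k)_{k∈ℕ} be real sequences with t₀ = 0, t_k < s_k < t_{k+1}, s_k − t_k ≥ θ, and t_{k+1} − t_k ≤ δ for all k ∈ ℕ. Assume that V′(t) ≤ −μ₁ V(t) for all t ∈ [t_k, s_k] and V′(t) ≤ μ₂ V(t) for all t ∈ [s_k, t_{k+1}], for every k ∈ ℕ. Then V(t) ≤ V(0)·exp(μ₂(δ−θ) + ε)·exp(−(ε/δ)·t) for all t ≥ 0; in particular V decays exponentially. -/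
lemma expBound (V V' : ℝ → ℝ) (c a b : ℝ) (hab : a ≤ b)
    (hd : ∀ x ∈ Set.Icc a b, HasDerivAt V (V' x) x)
    (hle : ∀ x ∈ Set.Icc a b, V' x ≤ c * V x) :
    ∀ x ∈ Set.Icc a b, V x ≤ V a * Real.exp (c * (x - a)) := by
  set g : ℝ → ℝ := fun x => V x * Real.exp (-c * x) with hg
  have hgd : ∀ x ∈ Set.Icc a b,
      HasDerivAt g (V' x * Real.exp (-c * x) + V x * (Real.exp (-c * x) * (-c))) x := by
    intro x hx
    have he : HasDerivAt (fun x => Real.exp (-c * x)) (Real.exp (-c * x) * (-c)) x := by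
      simpa using (((hasDerivAt_id x).const_mul (-c)).exp)
    exact (hd x hx).mul he
  have hanti : AntitoneOn g (Set.Icc a b) := by
    apply antitoneOn_of_deriv_nonpos (convex_Icc a b)
    · intro x hx
      exact ((hgd x hx).continuousAt).continuousWithinAt
    · intro x hx
      rw [interior_Icc] at hx
      exact ((hgd x (Set.Ioo_subset_Icc_self hx)).differentiableAt).differentiableWithinAt
    · intro x hx
      rw [interior_Icc] at hx
      rw [(hgd x (Set.Ioo_subset_Icc_self hx)).deriv]
      have h1 := hle x (Set.Ioo_subset_Icc_self hx)
      have h2 : (0:ℝ) < Real.exp (-c * x) := Real.exp_pos _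
      nlinarith
  intro x hx
  have := hanti (Set.left_mem_Icc.2 hab) hx hx.1
  have h2 : (0:ℝ) < Real.exp (-c * x) := Real.exp_pos _
  have key : V x ≤ V a * Real.exp (-c * a) * Real.exp (c * x) := by
    simp only [hg] at this
    calc V x = V x * Real.exp (-c * x) * Real.exp (c * x) := by
          rw [mul_assoc, ← Real.exp_add]; simp
      _ ≤ V a * Real.exp (-c * a) * Real.exp (c * x) := by
          apply mul_le_mul_of_nonneg_right this (Real.exp_pos _).le
  calc V x ≤ V a * Real.exp (-c * a) * Real.exp (c * x) := key
    _ = V a * Real.exp (c * (x - a)) := by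
        rw [mul_assoc, ← Real.exp_add]; ring_nf


/-- Deterministic core of Theorem 1: a nonnegative differentiable Lyapunov-type
function satisfying `V' ≤ -μ₁ V` on control-active intervals `[t_k, s_k]` and
`V' ≤ μ₂ V` on failed intervals `[s_k, t_{k+1}]` decays exponentially, provided
`ε := μ₁θ - μ₂(δ-θ) > 0`. -/
theorem stmt_0
    (V V' : ℝ → ℝ) (θ δ μ₁ μ₂ : ℝ) (t s : ℕ → ℝ)
    (hθ : 0 < θ) (hθδ : θ < δ) (hμ₁ : 0 < μ₁) (hμ₂ : 0 < μ₂)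
    (hε : 0 < μ₁ * θ - μ₂ * (δ - θ))
    (hVnonneg : ∀ x, 0 ≤ x → 0 ≤ V x)
    (hVderiv : ∀ x, 0 ≤ x → HasDerivAt V (V' x) x)
    (ht0 : t 0 = 0)
    (horder : ∀ k, t k < s k ∧ s k < t (k + 1))
    (hactive : ∀ k, θ ≤ s k - t k)
    (hcycle : ∀ k, t (k + 1) - t k ≤ δ)
    (hdec : ∀ k, ∀ x ∈ Set.Icc (t k) (s k), V' x ≤ -μ₁ * V x)
    (hinc : ∀ k, ∀ x ∈ Set.Icc (s k) (t (k + 1)), V' x ≤ μ₂ * V x) :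
    ∀ x, 0 ≤ x →
      V x ≤ V 0 * Real.exp (μ₂ * (δ - θ) + (μ₁ * θ - μ₂ * (δ - θ))) *
        Real.exp (-((μ₁ * θ - μ₂ * (δ - θ)) / δ) * x) := by
    intro x hx
    -- basic facts
    set ε := μ₁ * θ - μ₂ * (δ - θ) with hεdef
    have hδ : 0 < δ := hθ.trans hθδ
    have hts : ∀ k, t k < s k := fun k => (horder k).1
    have hst : ∀ k, s k < t (k + 1) := fun k => (horder k).2
    have htnn : ∀ k, 0 ≤ t k := by
      intro k; induction k with
      | zero => rw [ht0]
      | succ n ih => exact ih.trans ((hts n).trans (hst n)).le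
    have hsnn : ∀ k, 0 ≤ s k := fun k => (htnn k).trans (hts k).le
    -- decay on active interval
    have hdecay : ∀ k, ∀ y ∈ Set.Icc (t k) (s k),
        V y ≤ V (t k) * Real.exp (-μ₁ * (y - t k)) := by
      intro k
      apply expBound V V' (-μ₁) (t k) (s k) (hts k).le
      · intro y hy; exact hVderiv y ((htnn k).trans hy.1)
      · exact hdec k
    -- growth on failed interval
    have hgrow : ∀ k, ∀ y ∈ Set.Icc (s k) (t (k + 1)),
        V y ≤ V (s k) * Real.exp (μ₂ * (y - s k)) := by
      intro k
      apply expBound V V' μ₂ (s k) (t (k + 1)) (hst k).le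
      · intro y hy; exact hVderiv y ((hsnn k).trans hy.1)
      · exact hinc k
    -- per-cycle contraction
    have hcyc : ∀ k, V (t (k + 1)) ≤ V (t k) * Real.exp (-ε) := by
      intro k
      have h1 : V (s k) ≤ V (t k) * Real.exp (-μ₁ * (s k - t k)) :=
        hdecay k (s k) (Set.right_mem_Icc.2 (hts k).le)
      have h2 : V (t (k + 1)) ≤ V (s k) * Real.exp (μ₂ * (t (k + 1) - s k)) :=
        hgrow k (t (k + 1)) (Set.right_mem_Icc.2 (hst k).le)
      have h3 : V (t (k + 1)) ≤
          V (t k) * Real.exp (-μ₁ * (s k - t k)) * Real.exp (μ₂ * (t (k + 1) - s k)) :=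
        h2.trans (mul_le_mul_of_nonneg_right h1 (Real.exp_pos _).le)
      have h4 : -μ₁ * (s k - t k) + μ₂ * (t (k + 1) - s k) ≤ -ε := by
        have ha := hactive k
        have hc := hcycle k
        have : t (k + 1) - s k ≤ δ - θ := by linarith
        nlinarith [hts k, hst k]
      calc V (t (k + 1)) ≤
          V (t k) * (Real.exp (-μ₁ * (s k - t k)) * Real.exp (μ₂ * (t (k + 1) - s k))) := by
            rw [← mul_assoc]; exact h3
        _ ≤ V (t k) * Real.exp (-ε) := by
            apply mul_le_mul_of_nonneg_left _ (hVnonneg (t k) (htnn k))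
            rw [← Real.exp_add]
            exact Real.exp_le_exp.2 h4
    -- V (t k) ≤ V 0 * exp(-k ε)
    have htk : ∀ k : ℕ, V (t k) ≤ V 0 * Real.exp (-(k : ℝ) * ε) := by
      intro k; induction k with
      | zero => simp [ht0]
      | succ n ih =>
        calc V (t (n + 1)) ≤ V (t n) * Real.exp (-ε) := hcyc n
          _ ≤ V 0 * Real.exp (-(n : ℝ) * ε) * Real.exp (-ε) :=
              mul_le_mul_of_nonneg_right ih (Real.exp_pos _).le
          _ = V 0 * Real.exp (-((n : ℝ) + 1) * ε) := by
              rw [mul_assoc, ← Real.exp_add]; ring_nf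
          _ = V 0 * Real.exp (-((n + 1 : ℕ) : ℝ) * ε) := by push_cast; ring_nf
    -- t k ≤ k δ
    have htub : ∀ k : ℕ, t k ≤ (k : ℝ) * δ := by
      intro k; induction k with
      | zero => simp [ht0]
      | succ n ih =>
        have := hcycle n
        push_cast
        linarith
    -- t k ≥ k θ, so unbounded
    have htlb : ∀ k : ℕ, (k : ℝ) * θ ≤ t k := by
      intro k; induction k with
      | zero => simp [ht0]
      | succ n ih =>
        have ha := hactive n
        have := hst n
        push_cast
        linarith
    -- find the cycle containing x
    have hex : ∃ n, x < t n := by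
      obtain ⟨n, hn⟩ := exists_nat_gt (x / θ)
      refine ⟨n, lt_of_lt_of_le ?_ (htlb n)⟩
      rw [div_lt_iff₀ hθ] at hn; linarith
    classical
    have hNspec : x < t (Nat.find hex) := Nat.find_spec hex
    have hN0 : Nat.find hex ≠ 0 := by
      intro h
      rw [h, ht0] at hNspec; linarith
    obtain ⟨k, hk⟩ := Nat.exists_eq_succ_of_ne_zero hN0
    have hxlt : x < t (k + 1) := by rw [hk] at hNspec; exact hNspec
    have htkx : t k ≤ x := by
      by_contra h
      push_neg at h
      exact Nat.find_min hex (by omega) h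
    have hV0 : 0 ≤ V 0 := hVnonneg 0 le_rfl
    have hVtk : 0 ≤ V (t k) := hVnonneg _ (htnn k)
    have hexp1 : (1:ℝ) ≤ Real.exp (μ₂ * (δ - θ)) := by
      rw [Real.one_le_exp_iff]  -- maybe wrong name
      nlinarith
    have hbound : V x ≤ V (t k) * Real.exp (μ₂ * (δ - θ)) := by
      rcases le_or_gt x (s k) with hcase | hcase
      · have h1 := hdecay k x ⟨htkx, hcase⟩
        have h2 : Real.exp (-μ₁ * (x - t k)) ≤ 1 := by
          rw [Real.exp_le_one_iff]
          nlinarith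
        calc V x ≤ V (t k) * Real.exp (-μ₁ * (x - t k)) := h1
          _ ≤ V (t k) * 1 := mul_le_mul_of_nonneg_left h2 hVtk
          _ ≤ V (t k) * Real.exp (μ₂ * (δ - θ)) := mul_le_mul_of_nonneg_left hexp1 hVtk
      · have h2 := hgrow k x ⟨hcase.le, hxlt.le⟩
        have hVs : V (s k) ≤ V (t k) := by
          have h3 := hdecay k (s k) (Set.right_mem_Icc.2 (hts k).le)
          have h4 : Real.exp (-μ₁ * (s k - t k)) ≤ 1 := by
            rw [Real.exp_le_one_iff]
            have := hts k
            nlinarith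
          calc V (s k) ≤ V (t k) * Real.exp (-μ₁ * (s k - t k)) := h3
            _ ≤ V (t k) * 1 := mul_le_mul_of_nonneg_left h4 hVtk
            _ = V (t k) := mul_one _
        have hxs : μ₂ * (x - s k) ≤ μ₂ * (δ - θ) := by
          have ha := hactive k
          have hc := hcycle k
          nlinarith
        calc V x ≤ V (s k) * Real.exp (μ₂ * (x - s k)) := h2
          _ ≤ V (t k) * Real.exp (μ₂ * (δ - θ)) :=
            mul_le_mul hVs (Real.exp_le_exp.2 hxs) (Real.exp_pos _).le hVtk
    have hxk : x ≤ ((k : ℝ) + 1) * δ := by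
      have h := htub (k + 1)
      push_cast at h
      linarith
    have hexp2 : Real.exp (-(k:ℝ) * ε) * Real.exp (μ₂ * (δ - θ)) ≤
        Real.exp (μ₂ * (δ - θ) + ε) * Real.exp (-(ε / δ) * x) := by
      rw [← Real.exp_add, ← Real.exp_add]
      apply Real.exp_le_exp.2
      have h1 : (ε / δ) * x ≤ (ε / δ) * (((k:ℝ) + 1) * δ) :=
        mul_le_mul_of_nonneg_left hxk (div_nonneg hε.le hδ.le)
      have h2 : (ε / δ) * (((k:ℝ) + 1) * δ) = ((k:ℝ) + 1) * ε := by
        field_simp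
      nlinarith
    calc V x ≤ V (t k) * Real.exp (μ₂ * (δ - θ)) := hbound
      _ ≤ V 0 * Real.exp (-(k:ℝ) * ε) * Real.exp (μ₂ * (δ - θ)) :=
          mul_le_mul_of_nonneg_right (htk k) (Real.exp_pos _).le
      _ = V 0 * (Real.exp (-(k:ℝ) * ε) * Real.exp (μ₂ * (δ - θ))) := by ring
      _ ≤ V 0 * (Real.exp (μ₂ * (δ - θ) + ε) * Real.exp (-(ε / δ) * x)) :=
          mul_le_mul_of_nonneg_left hexp2 hV0
      _ = V 0 * Real.exp (μ₂ * (δ - θ) + ε) * Real.exp (-(ε / δ) * x) := by ring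
end

section
/- Let N, n ≥ 1, let c₁, c₂ ≥ 0, let L̃ ∈ ℝ^{N×N} with L̃ˢ := (L̃ + L̃ᵀ)/2, and let f : ℝ^n × ℝ^n → ℝ^n and ρ₁, ρ₂ ≥ 0 satisfy ‖f(x₁,v₁) − f(x₂,v₂)‖ ≤ ρ₁‖x₁ − x₂‖ + ρ₂‖v₁ − v₂‖ for all x₁, x₂, v₁, v₂ ∈ ℝ^n. Set Δ₃ := (c₁ρ₂ + c₂ρ₁)/2, Δ₁ := c₁ρ₁ + Δ₃, Δ₂ := c₂ρ₂ + Δ₃, and define the block matrices P = [[2c₁c₂ L̃ˢ, c₁ I_N],[c₁ I_N, c₂ I_N]], H₁ = [[0_N, I_N],[−c₁ L̃, −c₂ L̃]], and R₁ = [[c₁² L̃ˢ − Δ₁ I_N, 0_N],[0_N, c₂² L̃ˢ − (c₁ + Δ₂) I_N]]. For x₁,…,x_N, v₁,…,v_N, x₀, v₀ ∈ ℝ^n, let x̃ ∈ ℝ^{Nn} be the stacked vector with blocks x̃ᵢ = xᵢ − x₀, ṽ ∈ ℝ^{Nn} with blocks ṽᵢ = vᵢ − v₀, ξ = (x̃ᵀ,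 ṽᵀ)ᵀ ∈ ℝ^{2Nn}, ΔF ∈ ℝ^{Nn} with blocks ΔFᵢ = f(xᵢ,vᵢ) − f(x₀,v₀), and F̃ = (0ᵀ, ΔFᵀ)ᵀ ∈ ℝ^{2Nn}. Then ξᵀ(P ⊗ I_n)(F̃ + (H₁ ⊗ I_n)ξ) ≤ −ξᵀ(R₁ ⊗ I_n)ξ. -/
open Matrix Kronecker RealInnerProductSpace

lemma kron_mulVec_apply {N n : ℕ} (M : Matrix (Fin N ⊕ Fin N) (Fin N ⊕ Fin N) ℝ)
    (w : (Fin N ⊕ Fin N) × Fin n → ℝ) (s : Fin N ⊕ Fin N) (k : Fin n) :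
    ((M ⊗ₖ (1 : Matrix (Fin n) (Fin n) ℝ)).mulVec w) (s, k) = ∑ t, M s t * w (t, k) := by
  simp [Matrix.mulVec, dotProduct, Fintype.sum_prod_type, Matrix.one_apply, mul_ite,
    Finset.sum_ite_eq, mul_comm]

lemma dot_kron' {N n : ℕ} (M : Matrix (Fin N ⊕ Fin N) (Fin N ⊕ Fin N) ℝ)
    (u w : (Fin N ⊕ Fin N) × Fin n → ℝ) :
    u ⬝ᵥ ((M ⊗ₖ (1 : Matrix (Fin n) (Fin n) ℝ)).mulVec w)
      = ∑ k, (fun s => u (s, k)) ⬝ᵥ (M *ᵥ fun t => w (t, k)) := by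
  simp only [dotProduct, Fintype.sum_prod_type]
  rw [Finset.sum_comm]
  refine Finset.sum_congr rfl fun k _ => Finset.sum_congr rfl fun s _ => ?_
  rw [kron_mulVec_apply]
  rfl

lemma dot_transpose {N : ℕ} (Lt : Matrix (Fin N) (Fin N) ℝ) (α β : Fin N → ℝ) :
    α ⬝ᵥ (Ltᵀ *ᵥ β) = β ⬝ᵥ (Lt *ᵥ α) := by
  rw [mulVec_transpose, dotProduct_comm, ← dotProduct_mulVec]

lemma block_identity {N : ℕ} (c₁ c₂ Δ₁ Δ₂ : ℝ) (Lt : Matrix (Fin N) (Fin N) ℝ)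
    (α β γ : Fin N → ℝ) :
    Sum.elim α β ⬝ᵥ
        (Matrix.fromBlocks ((2 * c₁ * c₂) • ((1/2 : ℝ) • (Lt + Ltᵀ)))
            (c₁ • (1 : Matrix (Fin N) (Fin N) ℝ)) (c₁ • (1 : Matrix (Fin N) (Fin N) ℝ))
            (c₂ • (1 : Matrix (Fin N) (Fin N) ℝ)) *ᵥ
          (Sum.elim (0 : Fin N → ℝ) γ +
            Matrix.fromBlocks 0 (1 : Matrix (Fin N) (Fin N) ℝ) (-(c₁ • Lt)) (-(c₂ • Lt)) *ᵥ
              Sum.elim α β)) +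
      Sum.elim α β ⬝ᵥ
        (Matrix.fromBlocks ((c₁ ^ 2) • ((1/2 : ℝ) • (Lt + Ltᵀ)) - Δ₁ • (1 : Matrix (Fin N) (Fin N) ℝ))
            0 0
            ((c₂ ^ 2) • ((1/2 : ℝ) • (Lt + Ltᵀ)) - (c₁ + Δ₂) • (1 : Matrix (Fin N) (Fin N) ℝ)) *ᵥ
          Sum.elim α β)
    = c₁ * (α ⬝ᵥ γ) + c₂ * (β ⬝ᵥ γ) - Δ₁ * (α ⬝ᵥ α) - Δ₂ * (β ⬝ᵥ β) := by
  simp only [fromBlocks_mulVec, Sum.elim_comp_inl, Sum.elim_comp_inr, sub_mulVec,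
    add_mulVec, smul_mulVec, one_mulVec, zero_mulVec, neg_mulVec, mulVec_add,
    mulVec_smul, Pi.add_apply, sumElim_dotProduct_sumElim, dotProduct_add,
    dotProduct_smul, dotProduct_neg, dotProduct_zero, dotProduct_sub, smul_eq_mul,
    zero_add, add_zero, mulVec_neg, neg_smul, dotProduct_comm γ]
  have h1 : α ⬝ᵥ (Ltᵀ *ᵥ β) = β ⬝ᵥ (Lt *ᵥ α) := dot_transpose ..
  have h2 : α ⬝ᵥ (Ltᵀ *ᵥ α) = α ⬝ᵥ (Lt *ᵥ α) := dot_transpose ..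
  have h3 : β ⬝ᵥ (Ltᵀ *ᵥ β) = β ⬝ᵥ (Lt *ᵥ β) := dot_transpose ..
  rw [h1, h2, h3]
  simp only [mulVec_zero, dotProduct_zero, mul_zero, add_zero, zero_add]
  ring

/-- Drift bound underlying inequality (20) in the proof of Theorem 1
(control-active intervals): the derivative of the Lyapunov function along the
deterministic part of the closed-loop lag-error dynamics is bounded by the
negative quadratic form of `R₁`. -/
theorem stmt_10 (N n : ℕ) (hN : 1 ≤ N) (hn : 1 ≤ n)
    (c₁ c₂ : ℝ) (hc₁ : 0 ≤ c₁) (hc₂ : 0 ≤ c₂)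
    (Lt : Matrix (Fin N) (Fin N) ℝ)
    (f : EuclideanSpace ℝ (Fin n) → EuclideanSpace ℝ (Fin n) → EuclideanSpace ℝ (Fin n))
    (ρ₁ ρ₂ : ℝ) (hρ₁ : 0 ≤ ρ₁) (hρ₂ : 0 ≤ ρ₂)
    (hLip : ∀ x₁ x₂ v₁ v₂ : EuclideanSpace ℝ (Fin n),
      ‖f x₁ v₁ - f x₂ v₂‖ ≤ ρ₁ * ‖x₁ - x₂‖ + ρ₂ * ‖v₁ - v₂‖)
    (x v : Fin N → EuclideanSpace ℝ (Fin n)) (x₀ v₀ : EuclideanSpace ℝ (Fin n)) :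
    let Δ₃ : ℝ := (c₁ * ρ₂ + c₂ * ρ₁) / 2
    let Δ₁ : ℝ := c₁ * ρ₁ + Δ₃
    let Δ₂ : ℝ := c₂ * ρ₂ + Δ₃
    let Ls : Matrix (Fin N) (Fin N) ℝ := (1 / 2 : ℝ) • (Lt + Ltᵀ)
    let P : Matrix (Fin N ⊕ Fin N) (Fin N ⊕ Fin N) ℝ :=
      Matrix.fromBlocks ((2 * c₁ * c₂) • Ls) (c₁ • (1 : Matrix (Fin N) (Fin N) ℝ))
        (c₁ • (1 : Matrix (Fin N) (Fin N) ℝ)) (c₂ • (1 : Matrix (Fin N) (Fin N) ℝ))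
    let H₁ : Matrix (Fin N ⊕ Fin N) (Fin N ⊕ Fin N) ℝ :=
      Matrix.fromBlocks 0 (1 : Matrix (Fin N) (Fin N) ℝ) (-(c₁ • Lt)) (-(c₂ • Lt))
    let R₁ : Matrix (Fin N ⊕ Fin N) (Fin N ⊕ Fin N) ℝ :=
      Matrix.fromBlocks ((c₁ ^ 2) • Ls - Δ₁ • (1 : Matrix (Fin N) (Fin N) ℝ)) 0 0
        ((c₂ ^ 2) • Ls - (c₁ + Δ₂) • (1 : Matrix (Fin N) (Fin N) ℝ))
    let ξ : (Fin N ⊕ Fin N) × Fin n → ℝ := fun p =>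
      match p.1 with
      | Sum.inl i => (x i - x₀) p.2
      | Sum.inr i => (v i - v₀) p.2
    let Ft : (Fin N ⊕ Fin N) × Fin n → ℝ := fun p =>
      match p.1 with
      | Sum.inl _ => 0
      | Sum.inr i => (f (x i) (v i) - f x₀ v₀) p.2
    ξ ⬝ᵥ ((P ⊗ₖ (1 : Matrix (Fin n) (Fin n) ℝ)).mulVec
        (Ft + (H₁ ⊗ₖ (1 : Matrix (Fin n) (Fin n) ℝ)).mulVec ξ)) ≤
      -(ξ ⬝ᵥ ((R₁ ⊗ₖ (1 : Matrix (Fin n) (Fin n) ℝ)).mulVec ξ)) := by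
  intro Δ₃ Δ₁ Δ₂ Ls P H₁ R₁ ξ Ft
  set a : Fin n → Fin N → ℝ := fun k i => (x i - x₀) k with ha
  set b : Fin n → Fin N → ℝ := fun k i => (v i - v₀) k with hb
  set g : Fin n → Fin N → ℝ := fun k i => (f (x i) (v i) - f x₀ v₀) k with hg
  have hξ : ∀ k, (fun s => ξ (s, k)) = Sum.elim (a k) (b k) := by
    intro k; funext s; cases s <;> rfl
  have hw : ∀ k, (fun t => (Ft + (H₁ ⊗ₖ (1 : Matrix (Fin n) (Fin n) ℝ)).mulVec ξ) (t, k))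
      = Sum.elim (0 : Fin N → ℝ) (g k) + H₁ *ᵥ Sum.elim (a k) (b k) := by
    intro k; funext t
    have h := kron_mulVec_apply H₁ ξ t k
    simp only [Pi.add_apply, h]
    have : (H₁ *ᵥ Sum.elim (a k) (b k)) t = ∑ t', H₁ t t' * ξ (t', k) := by
      simp only [Matrix.mulVec, dotProduct]
      refine Finset.sum_congr rfl fun t' _ => ?_
      cases t' <;> rfl
    rw [this]
    cases t <;> rfl
  have key : ξ ⬝ᵥ ((P ⊗ₖ (1 : Matrix (Fin n) (Fin n) ℝ)).mulVec
        (Ft + (H₁ ⊗ₖ (1 : Matrix (Fin n) (Fin n) ℝ)).mulVec ξ))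
      + ξ ⬝ᵥ ((R₁ ⊗ₖ (1 : Matrix (Fin n) (Fin n) ℝ)).mulVec ξ)
      = ∑ k, (c₁ * (a k ⬝ᵥ g k) + c₂ * (b k ⬝ᵥ g k)
          - Δ₁ * (a k ⬝ᵥ a k) - Δ₂ * (b k ⬝ᵥ b k)) := by
    rw [dot_kron', dot_kron', ← Finset.sum_add_distrib]
    refine Finset.sum_congr rfl fun k _ => ?_
    rw [hξ, hw]
    simp only [P, R₁, H₁, Ls]
    exact block_identity c₁ c₂ Δ₁ Δ₂ Lt (a k) (b k) (g k)
  have hsum : ∑ k, (c₁ * (a k ⬝ᵥ g k) + c₂ * (b k ⬝ᵥ g k)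
          - Δ₁ * (a k ⬝ᵥ a k) - Δ₂ * (b k ⬝ᵥ b k)) ≤ 0 := by
    have swap : ∑ k, (c₁ * (a k ⬝ᵥ g k) + c₂ * (b k ⬝ᵥ g k)
          - Δ₁ * (a k ⬝ᵥ a k) - Δ₂ * (b k ⬝ᵥ b k))
        = ∑ i : Fin N, (c₁ * (inner ℝ (x i - x₀) (f (x i) (v i) - f x₀ v₀) : ℝ)
            + c₂ * (inner ℝ (v i - v₀) (f (x i) (v i) - f x₀ v₀) : ℝ)
            - Δ₁ * (inner ℝ (x i - x₀) (x i - x₀) : ℝ)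
            - Δ₂ * (inner ℝ (v i - v₀) (v i - v₀) : ℝ)) := by
      simp only [dotProduct, Finset.mul_sum, ← Finset.sum_sub_distrib,
        ← Finset.sum_add_distrib, PiLp.inner_apply, RCLike.inner_apply, starRingEnd_apply,
        star_trivial]
      rw [Finset.sum_comm]
      refine Finset.sum_congr rfl fun i _ => Finset.sum_congr rfl fun k _ => ?_
      simp only [ha, hb, hg]
      ring
    rw [swap]
    apply Finset.sum_nonpos
    intro i _
    have hA := real_inner_le_norm (x i - x₀) (f (x i) (v i) - f x₀ v₀)
    have hB := real_inner_le_norm (v i - v₀) (f (x i) (v i) - f x₀ v₀)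
    have hL := hLip (x i) x₀ (v i) v₀
    have hna := norm_nonneg (x i - x₀)
    have hnb := norm_nonneg (v i - v₀)
    have hng := norm_nonneg (f (x i) (v i) - f x₀ v₀)
    rw [real_inner_self_eq_norm_sq, real_inner_self_eq_norm_sq]
    have hΔ₁ : Δ₁ = c₁ * ρ₁ + (c₁ * ρ₂ + c₂ * ρ₁) / 2 := rfl
    have hΔ₂ : Δ₂ = c₂ * ρ₂ + (c₁ * ρ₂ + c₂ * ρ₁) / 2 := rfl
    rw [hΔ₁, hΔ₂]
    have h3 : (c₁ * ‖x i - x₀‖ + c₂ * ‖v i - v₀‖) * ‖f (x i) (v i) - f x₀ v₀‖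
        ≤ (c₁ * ‖x i - x₀‖ + c₂ * ‖v i - v₀‖) * (ρ₁ * ‖x i - x₀‖ + ρ₂ * ‖v i - v₀‖) :=
      mul_le_mul_of_nonneg_left hL
        (add_nonneg (mul_nonneg hc₁ hna) (mul_nonneg hc₂ hnb))
    have h4 : 0 ≤ (c₁ * ρ₂ + c₂ * ρ₁) * (‖x i - x₀‖ - ‖v i - v₀‖) ^ 2 := by positivity
    nlinarith [h3, h4, mul_le_mul_of_nonneg_left hA hc₁, mul_le_mul_of_nonneg_left hB hc₂]
  have h2 := key.le.trans hsum
  linarith [h2]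
end
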